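/- Let X be a regular topological space with points Gδ such that Bob has a winning strategy in the game G_fin^{ω₁}(O,O). Then |X| ≤ 2^ω. -/

import Mathlib

universe u

/-- A family of sets is an open cover: all members are open and their union is the whole space. -/
def IsOpenCover {X : Type u} [TopologicalSpace X] (𝒞 : Set (Set X)) : Prop :=
  (∀ U ∈ 𝒞, IsOpen U) ∧ ⋃₀ 𝒞 = Set.univ

/-- A strategy for Bob in the game `G_fin^κ(O,O)`: at inning `ξ < κ`, given the history of
Alice's previous moves and Alice's current open cover `𝒞`, Bob picks a finite subfamily of `𝒞`. -/
structure BobStratFin (X : Type u) [TopologicalSpace X] (κ : Ordinal.{u}) where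
  move : ∀ ξ : Ordinal.{u}, ξ < κ → (∀ α : Ordinal.{u}, α < ξ → Set (Set X)) →
    Set (Set X) → Finset (Set X)
  subset : ∀ ξ hξ hist 𝒞, (↑(move ξ hξ hist 𝒞) : Set (Set X)) ⊆ 𝒞

/-- The strategy is winning: against every play of open covers by Alice, the union of all of
Bob's finite selections covers the space. -/
def BobStratFin.Winning {X : Type u} [TopologicalSpace X] {κ : Ordinal.{u}}
    (S : BobStratFin X κ) : Prop :=
  ∀ f : ∀ ξ : Ordinal.{u}, ξ < κ → Set (Set X),
    (∀ ξ hξ, IsOpenCover (f ξ hξ)) →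
    (⋃ ξ, ⋃ hξ : ξ < κ,
      ⋃₀ (↑(S.move ξ hξ (fun α hα => f α (hα.trans hξ)) (f ξ hξ)) : Set (Set X))) = Set.univ

/-- `K` is good: there is a partial play `s` (a sequence of open covers of length `ξ < κ`)
such that `K` is the intersection, over all open covers `𝒞`, of the closures of the unions of
Bob's responses `σ(s⌢𝒞)`. -/
def BobStratFin.Good {X : Type u} [TopologicalSpace X] {κ : Ordinal.{u}}
    (S : BobStratFin X κ) (K : Set X) : Prop :=
  ∃ (ξ : Ordinal.{u}) (hξ : ξ < κ) (hist : ∀ α : Ordinal.{u}, α < ξ → Set (Set X)),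
    (∀ α hα, IsOpenCover (hist α hα)) ∧
    K = ⋂ 𝒞 : {𝒞 : Set (Set X) // IsOpenCover 𝒞},
          closure (⋃₀ (↑(S.move ξ hξ hist 𝒞.1) : Set (Set X)))

open Cardinal Set Filter

namespace CardGameAux

variable {X : Type u} [TopologicalSpace X]

lemma isOpenCover_univ : IsOpenCover ({Set.univ} : Set (Set X)) :=
  ⟨fun U hU => by rw [Set.mem_singleton_iff] at hU; rw [hU]; exact isOpen_univ,
   by simp⟩

/-- In a regular space, inside any open set around a point there is an open set whose closure
is inside. -/
lemma regular_interp [RegularSpace X] {x : X} {O : Set X} (hO : IsOpen O) (hx : x ∈ O) :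
    ∃ W : Set X, IsOpen W ∧ x ∈ W ∧ closure W ⊆ O := by
  obtain ⟨C, ⟨hCmem, hCclosed⟩, hCO⟩ := (closed_nhds_basis x).mem_iff.mp (hO.mem_nhds hx)
  exact ⟨interior C, isOpen_interior, mem_interior_iff_mem_nhds.mpr hCmem,
    (closure_minimal interior_subset hCclosed).trans hCO⟩

/-- The "good set" determined by a partial play. -/
noncomputable def Kset {κ : Ordinal.{u}} (S : BobStratFin X κ) (ξ : Ordinal.{u}) (hξ : ξ < κ)
    (hist : ∀ α : Ordinal.{u}, α < ξ → Set (Set X)) : Set X :=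
  ⋂ 𝒞 : {𝒞 : Set (Set X) // IsOpenCover 𝒞},
    closure (⋃₀ (↑(S.move ξ hξ hist 𝒞.1) : Set (Set X)))

lemma Kset_closed {κ : Ordinal.{u}} (S : BobStratFin X κ) (ξ : Ordinal.{u}) (hξ : ξ < κ)
    (hist : ∀ α : Ordinal.{u}, α < ξ → Set (Set X)) : IsClosed (Kset S ξ hξ hist) :=
  isClosed_iInter fun _ => isClosed_closure

lemma Kset_subset {κ : Ordinal.{u}} (S : BobStratFin X κ) (ξ : Ordinal.{u}) (hξ : ξ < κ)
    (hist : ∀ α : Ordinal.{u}, α < ξ → Set (Set X)) {𝒞 : Set (Set X)} (h𝒞 : IsOpenCover 𝒞) :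
    Kset S ξ hξ hist ⊆ closure (⋃₀ (↑(S.move ξ hξ hist 𝒞) : Set (Set X))) :=
  Set.iInter_subset _ (⟨𝒞, h𝒞⟩ : {𝒞 : Set (Set X) // IsOpenCover 𝒞})

lemma not_mem_Kset {κ : Ordinal.{u}} {S : BobStratFin X κ} {ξ : Ordinal.{u}} {hξ : ξ < κ}
    {hist : ∀ α : Ordinal.{u}, α < ξ → Set (Set X)} {x : X} (hx : x ∉ Kset S ξ hξ hist) :
    ∃ 𝒞 : Set (Set X), IsOpenCover 𝒞 ∧
      x ∉ closure (⋃₀ (↑(S.move ξ hξ hist 𝒞) : Set (Set X))) := by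
  by_contra h
  push_neg at h
  exact hx (Set.mem_iInter.mpr fun 𝒞 => h 𝒞.1 𝒞.2)

/-- Each good set is compact (this is where regularity is used). -/
lemma Kset_compact [RegularSpace X] {κ : Ordinal.{u}} (S : BobStratFin X κ) (ξ : Ordinal.{u})
    (hξ : ξ < κ) (hist : ∀ α : Ordinal.{u}, α < ξ → Set (Set X)) :
    IsCompact (Kset S ξ hξ hist) := by
  rw [isCompact_iff_ultrafilter_le_nhds]
  intro f hf
  by_contra hcon
  push_neg at hcon
  set K := Kset S ξ hξ hist with hKdef
  have hKf : K ∈ f := le_principal_iff.mp hf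
  have hno : ∀ y : X, ¬ (↑f ≤ nhds y) := by
    intro y hy
    have hyK : y ∈ K := by
      have h1 : y ∈ closure K := mem_closure_iff_ultrafilter.mpr ⟨f, hKf, hy⟩
      rwa [(Kset_closed S ξ hξ hist).closure_eq] at h1
    exact hcon y hyK hy
  have hsel : ∀ y : X, ∃ V : Set X, IsOpen V ∧ y ∈ V ∧ Vᶜ ∈ f := by
    intro y
    have h2 := hno y
    rw [Filter.le_def] at h2; push_neg at h2
    obtain ⟨V, hV, hVf⟩ := h2
    obtain ⟨O, hOV, hO, hyO⟩ := mem_nhds_iff.mp hV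
    refine ⟨O, hO, hyO, Ultrafilter.compl_mem_iff_notMem.mpr ?_⟩
    exact fun hOf => hVf (Filter.mem_of_superset hOf hOV)
  choose V hVopen hVmem hVf using hsel
  have hsel2 : ∀ y : X, ∃ W : Set X, IsOpen W ∧ y ∈ W ∧ closure W ⊆ V y :=
    fun y => regular_interp (hVopen y) (hVmem y)
  choose W hWopen hWmem hWcl using hsel2
  have hcov : IsOpenCover (Set.range W) :=
    ⟨by rintro U ⟨y, rfl⟩; exact hWopen y,
     Set.eq_univ_of_forall fun y => ⟨W y, ⟨y, rfl⟩, hWmem y⟩⟩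
  set F := S.move ξ hξ hist (Set.range W) with hF
  have hsubK : K ⊆ closure (⋃₀ (↑F : Set (Set X))) := Kset_subset _ _ _ _ hcov
  have hrep : ∀ s ∈ (↑F : Set (Set X)), ∃ y : X, s = W y := by
    intro s hs
    obtain ⟨y, hy⟩ := (S.subset ξ hξ hist (Set.range W)) hs
    exact ⟨y, hy.symm⟩
  have hne : Nonempty X := Filter.nonempty_of_neBot ↑f
  choose! yof hyof using hrep
  classical
  set T : Finset X := F.attach.image (fun s => yof s.1) with hT
  have hKV : K ⊆ ⋃ y ∈ T, V y := by
    intro x hx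
    have h3 : x ∈ ⋃ s ∈ (↑F : Set (Set X)), closure s := by
      have := hsubK hx
      rwa [Set.sUnion_eq_biUnion, F.finite_toSet.closure_biUnion] at this
    obtain ⟨s, hsF, hxs⟩ := Set.mem_iUnion₂.mp h3
    refine Set.mem_iUnion₂.mpr ⟨yof s, ?_, ?_⟩
    · exact Finset.mem_image.mpr ⟨⟨s, hsF⟩, Finset.mem_attach _ _, rfl⟩
    · apply hWcl (yof s)
      rwa [hyof s hsF] at hxs
  have hBf : (K ∩ ⋂ y ∈ (↑T : Set X), (V y)ᶜ) ∈ f := by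
    refine Filter.inter_mem hKf ?_
    exact (Filter.biInter_mem T.finite_toSet).mpr fun y _ => hVf y
  obtain ⟨z, hzK, hzI⟩ := Filter.nonempty_of_mem hBf
  obtain ⟨y, hyT, hzy⟩ := Set.mem_iUnion₂.mp (hKV hzK)
  exact (Set.mem_iInter₂.mp hzI y hyT) hzy

/-- From the winning strategy: every open cover has a subcover of size `≤ ℵ₁`. -/
lemma exists_subcover (S : BobStratFin X (Cardinal.aleph 1).ord) (hS : S.Winning)
    {𝒰 : Set (Set X)} (h𝒰 : IsOpenCover 𝒰) :
    ∃ 𝒮 : Set (Set X), 𝒮 ⊆ 𝒰 ∧ ⋃₀ 𝒮 = Set.univ ∧ Cardinal.mk 𝒮 ≤ Cardinal.aleph 1 := by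
  classical
  have hwin := hS (fun _ _ => 𝒰) (fun _ _ => h𝒰)
  let e := @Ordinal.ToType.mk (Cardinal.aleph 1).ord
  let Fam : (Cardinal.aleph 1).ord.ToType → Set (Set X) := fun i =>
    (↑(S.move (e.symm i).1 (e.symm i).2 (fun _ _ => 𝒰) 𝒰) : Set (Set X))
  refine ⟨⋃ i, Fam i, ?_, ?_, ?_⟩
  · intro s hs
    obtain ⟨i, hi⟩ := Set.mem_iUnion.mp hs
    exact S.subset _ _ _ _ hi
  · apply Set.eq_univ_of_forall
    intro x
    have hx := (Set.eq_univ_iff_forall.mp hwin) x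
    obtain ⟨ξ', hmem⟩ := Set.mem_iUnion.mp hx
    obtain ⟨hξ', hmem⟩ := Set.mem_iUnion.mp hmem
    obtain ⟨s, hsF, hxs⟩ := hmem
    refine Set.mem_sUnion.mpr ⟨s, ?_, hxs⟩
    refine Set.mem_iUnion.mpr ⟨e ⟨ξ', hξ'⟩, ?_⟩
    have h5 : e.symm (e ⟨ξ', hξ'⟩) = ⟨ξ', hξ'⟩ := e.symm_apply_apply _
    show s ∈ (↑(S.move (e.symm (e ⟨ξ', hξ'⟩)).1 (e.symm (e ⟨ξ', hξ'⟩)).2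
      (fun _ _ => 𝒰) 𝒰) : Set (Set X))
    rw [h5]
    exact hsF
  · have h1 : Cardinal.mk (⋃ i, Fam i : Set (Set X)) ≤
        Cardinal.mk (Cardinal.aleph 1).ord.ToType * ⨆ i, Cardinal.mk (Fam i) := Cardinal.mk_iUnion_le Fam
    have h2 : Cardinal.mk (Cardinal.aleph 1).ord.ToType = Cardinal.aleph 1 := by
      rw [Cardinal.mk_toType, Cardinal.card_ord]
    have h3 : (⨆ i, Cardinal.mk (Fam i)) ≤ Cardinal.aleph0 := by
      refine ciSup_le' fun i => ?_
      exact le_of_lt (Set.Finite.lt_aleph0 (Finset.finite_toSet _))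
    calc Cardinal.mk (⋃ i, Fam i : Set (Set X))
        ≤ Cardinal.mk (Cardinal.aleph 1).ord.ToType * ⨆ i, Cardinal.mk (Fam i) := h1
      _ ≤ Cardinal.aleph 1 * Cardinal.aleph0 := by
          rw [h2]; exact mul_le_mul_right h3 _
      _ ≤ Cardinal.aleph 1 := by
          refine (Cardinal.mul_le_max _ _).trans ?_
          simp [Cardinal.aleph0_lt_aleph_one.le]

end CardGameAux

section Arhangelskii

lemma mk_finset_le' (α : Type u) :
    Cardinal.mk (Finset α) ≤ max Cardinal.aleph0 (Cardinal.mk α) := by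
  have hinj : Function.Injective (fun t : Finset α => t.1.toList) := by
    intro t1 t2 h
    apply Finset.val_injective
    have h2 := congrArg (fun l : List α => (↑l : Multiset α)) h
    simpa [Multiset.coe_toList] using h2
  exact (Cardinal.mk_le_of_injective hinj).trans (Cardinal.mk_list_le_max α)

lemma continuum_power_aleph0' :
    Cardinal.continuum.{u} ^ Cardinal.aleph0.{u} = Cardinal.continuum.{u} := by
  rw [← Cardinal.two_power_aleph0, ← Cardinal.power_mul, Cardinal.aleph0_mul_aleph0]

lemma mul_le_continuum' {a b : Cardinal.{u}} (ha : a ≤ Cardinal.continuum.{u})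
    (hb : b ≤ Cardinal.continuum.{u}) : a * b ≤ Cardinal.continuum.{u} := by
  calc a * b ≤ Cardinal.continuum * Cardinal.continuum := mul_le_mul' ha hb
    _ = Cardinal.continuum := Cardinal.mul_eq_self Cardinal.aleph0_le_continuum

/-- A compact Hausdorff space with all points `Gδ` is first countable. -/
lemma firstCountable_of_gdelta {K : Type u} [TopologicalSpace K] [CompactSpace K] [T2Space K]
    (h : ∀ x : K, ∃ U : ℕ → Set K, (∀ n, IsOpen (U n)) ∧ (⋂ n, U n) = {x}) :
    FirstCountableTopology K := by
  classical
  constructor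
  intro x
  obtain ⟨U, hUopen, hUx⟩ := h x
  have hxU : ∀ n, x ∈ U n := fun n =>
    Set.mem_iInter.mp (hUx ▸ Set.mem_singleton x) n
  have key : ∀ O : Set K, IsOpen O → x ∈ O →
      ∃ W : Set K, IsOpen W ∧ x ∈ W ∧ closure W ⊆ O := fun O hO hxO =>
    CardGameAux.regular_interp hO hxO
  choose! interp hIo hIx hIc using key
  let W : ℕ → Set K := fun n =>
    Nat.rec (interp (U 0)) (fun n Wn => interp (Wn ∩ U (n + 1))) n
  have hW : ∀ n, IsOpen (W n) ∧ x ∈ W n := by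
    intro n
    induction n with
    | zero => exact ⟨hIo _ (hUopen 0) (hxU 0), hIx _ (hUopen 0) (hxU 0)⟩
    | succ n ih =>
        have hO : IsOpen (W n ∩ U (n + 1)) := ih.1.inter (hUopen (n + 1))
        have hx : x ∈ W n ∩ U (n + 1) := ⟨ih.2, hxU (n + 1)⟩
        exact ⟨hIo _ hO hx, hIx _ hO hx⟩
  have hWcl : ∀ n, closure (W (n + 1)) ⊆ W n ∩ U (n + 1) := by
    intro n
    have hO : IsOpen (W n ∩ U (n + 1)) := (hW n).1.inter (hUopen (n + 1))
    have hx : x ∈ W n ∩ U (n + 1) := ⟨(hW n).2, hxU (n + 1)⟩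
    exact hIc _ hO hx
  have hWcl0 : closure (W 0) ⊆ U 0 := hIc _ (hUopen 0) (hxU 0)
  have hWU : ∀ n, closure (W n) ⊆ U n := by
    intro n
    cases n with
    | zero => exact hWcl0
    | succ n => exact (hWcl n).trans Set.inter_subset_right
  have hbasis : ∀ t : Set K, t ∈ nhds x ↔ ∃ n : ℕ, True ∧ W n ⊆ t := by
    intro t
    constructor
    · intro ht
      obtain ⟨O, hOt, hO, hxO⟩ := mem_nhds_iff.mp ht
      by_contra hno
      push_neg at hno
      have hCne : ∀ n : ℕ, (closure (W n) ∩ Oᶜ).Nonempty := by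
        intro n
        rcases Set.eq_empty_or_nonempty (closure (W n) ∩ Oᶜ) with he | hne
        · exfalso
          refine hno n trivial (subset_trans subset_closure (subset_trans ?_ hOt))
          intro z hz
          by_contra hzO
          exact Set.eq_empty_iff_forall_notMem.mp he z ⟨hz, hzO⟩
        · exact hne
      have hanti : Antitone fun n => closure (W n) ∩ Oᶜ := by
        refine antitone_nat_of_succ_le fun n => ?_
        exact Set.inter_subset_inter_left _
          ((hWcl n).trans (Set.inter_subset_left.trans subset_closure))
      have hne := IsCompact.nonempty_iInter_of_directed_nonempty_isCompact_isClosed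
        (fun n => closure (W n) ∩ Oᶜ) hanti.directed_ge hCne
        (fun n => ((isClosed_closure.inter (hO.isClosed_compl))).isCompact)
        (fun n => isClosed_closure.inter hO.isClosed_compl)
      obtain ⟨z, hz⟩ := hne
      have hz1 : z ∈ ⋂ n, U n := by
        refine Set.mem_iInter.mpr fun n => ?_
        exact hWU n (Set.mem_iInter.mp hz n).1
      rw [hUx] at hz1
      have hzO : z ∈ Oᶜ := (Set.mem_iInter.mp hz 0).2
      exact hzO (hz1 ▸ hxO)
    · rintro ⟨n, -, hWt⟩
      exact Filter.mem_of_superset ((hW n).1.mem_nhds (hW n).2) hWt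
  exact (Filter.HasBasis.isCountablyGenerated
    (Filter.hasBasis_iff.mpr hbasis))

/-- Arhangelskii's theorem for compact spaces: a compact Hausdorff first countable space has
cardinality at most the continuum. -/
lemma arhangelskii_compact {K : Type u} [TopologicalSpace K] [CompactSpace K] [T2Space K]
    [FirstCountableTopology K] :
    Cardinal.mk K ≤ Cardinal.continuum.{u} := by
  classical
  rcases isEmpty_or_nonempty K with hKe | hKn
  · calc Cardinal.mk K = 0 := Cardinal.mk_eq_zero K
      _ ≤ _ := zero_le
  -- countable bases at every point
  have hbase : ∀ x : K, ∃ bb : ℕ → Set K, (∀ n, IsOpen (bb n)) ∧ (∀ n, x ∈ bb n) ∧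
      ∀ O : Set K, IsOpen O → x ∈ O → ∃ n, bb n ⊆ O := by
    intro x
    obtain ⟨s, hs⟩ := (nhds x).exists_antitone_basis
    refine ⟨fun n => interior (s n), fun n => isOpen_interior, fun n =>
      mem_interior_iff_mem_nhds.mpr (hs.toHasBasis.mem_of_mem trivial), ?_⟩
    intro O hO hxO
    obtain ⟨n, -, hn⟩ := hs.toHasBasis.mem_iff.mp (hO.mem_nhds hxO)
    exact ⟨n, interior_subset.trans hn⟩
  choose b hbo hbm hbb using hbase
  -- witness function for non-covering families
  have hwitex : ∀ 𝒱 : Set (Set K), ⋃₀ 𝒱 ≠ Set.univ → ∃ z : K, z ∉ ⋃₀ 𝒱 := fun 𝒱 h =>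
    (Set.ne_univ_iff_exists_notMem _).mp h
  choose! wit hwit using hwitex
  -- cardinality of closures (via sequences)
  have hclos : ∀ T : Set K, Cardinal.mk T ≤ Cardinal.continuum.{u} →
      Cardinal.mk (closure T) ≤ Cardinal.continuum.{u} := by
    intro T hT
    rcases Set.eq_empty_or_nonempty T with rfl | hTne
    · rw [closure_empty]; exact hT
    have hseq : ∀ z : closure T, ∃ u : ℕ → K, (∀ n, u n ∈ T) ∧
        Filter.Tendsto u Filter.atTop (nhds z.1) := fun z => mem_closure_iff_seq_limit.mp z.2
    choose sq hsq1 hsq2 using hseq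
    have hinj : Function.Injective
        (fun z : closure T => (fun n => (⟨sq z n, hsq1 z n⟩ : T))) := by
      intro z1 z2 he
      have he' : sq z1 = sq z2 := by
        funext n
        exact congrArg Subtype.val (congrFun he n)
      exact Subtype.ext (tendsto_nhds_unique (he' ▸ hsq2 z1) (hsq2 z2))
    calc Cardinal.mk (closure T) ≤ Cardinal.mk (ℕ → ↥T) := Cardinal.mk_le_of_injective hinj
      _ ≤ Cardinal.continuum.{u} := by
          rw [Cardinal.mk_arrow, Cardinal.mk_nat, Cardinal.lift_aleph0, Cardinal.lift_uzero]
          calc (Cardinal.mk ↥T) ^ Cardinal.aleph0.{u}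
              ≤ Cardinal.continuum.{u} ^ Cardinal.aleph0.{u} :=
                Cardinal.power_le_power_right hT
            _ = _ := continuum_power_aleph0'
  -- the closing-off construction
  let famOf : ∀ S : Set K, Finset (↥S × ℕ) → Set (Set K) := fun S t =>
    (fun p : ↥S × ℕ => b p.1.1 p.2) '' ↑t
  let step : Set K → Set K := fun S =>
    closure (S ∪ Set.range (fun t : Finset (↥S × ℕ) => wit (famOf S t)))
  let F : ∀ ξ : Ordinal.{u}, (∀ α : Ordinal.{u}, α < ξ → Set K) → Set K := fun ξ rec =>
    step (⋃ i : ξ.ToType, rec ((@Ordinal.ToType.mk ξ).symm i).1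
      ((@Ordinal.ToType.mk ξ).symm i).2)
  let Hst : Ordinal.{u} → Set K := Ordinal.lt_wf.fix F
  let Ufam : Ordinal.{u} → Set K := fun ξ =>
    ⋃ i : ξ.ToType, Hst ((@Ordinal.ToType.mk ξ).symm i).1
  have Hst_eq : ∀ ξ, Hst ξ = step (Ufam ξ) := fun ξ => Ordinal.lt_wf.fix_eq F ξ
  have hstep_sub : ∀ S : Set K, S ⊆ step S := fun S =>
    Set.subset_union_left.trans subset_closure
  have Hsub : ∀ α ξ : Ordinal.{u}, α < ξ → Hst α ⊆ Ufam ξ := by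
    intro α ξ hlt x hx
    refine Set.mem_iUnion.mpr ⟨(@Ordinal.ToType.mk ξ) ⟨α, hlt⟩, ?_⟩
    rw [OrderIso.symm_apply_apply]
    exact hx
  have Umem : ∀ (ξ : Ordinal.{u}) (x : K), x ∈ Ufam ξ → ∃ α, α < ξ ∧ x ∈ Hst α := by
    intro ξ x hx
    obtain ⟨i, hi⟩ := Set.mem_iUnion.mp hx
    exact ⟨_, ((@Ordinal.ToType.mk ξ).symm i).2, hi⟩
  set ω₁o : Ordinal.{u} := (Cardinal.aleph 1).ord with hω₁o
  have hω₁lim : Order.IsSuccLimit ω₁o := Cardinal.isSuccLimit_ord Cardinal.aleph0_lt_aleph_one.le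
  -- cardinality of the stages
  have hUcard : ∀ ξ : Ordinal.{u},
      (∀ α, α < ξ → Cardinal.mk (Hst α) ≤ Cardinal.continuum.{u}) →
      Cardinal.mk ξ.ToType ≤ Cardinal.continuum.{u} →
      Cardinal.mk (Ufam ξ) ≤ Cardinal.continuum.{u} := by
    intro ξ IH hξc
    have h1 := Cardinal.mk_iUnion_le
      (fun i : ξ.ToType => Hst ((@Ordinal.ToType.mk ξ).symm i).1)
    have h3 : (⨆ i : ξ.ToType,
        Cardinal.mk (Hst ((@Ordinal.ToType.mk ξ).symm i).1)) ≤ Cardinal.continuum.{u} :=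
      ciSup_le' fun i => IH _ ((@Ordinal.ToType.mk ξ).symm i).2
    exact h1.trans (mul_le_continuum' hξc h3)
  have hcard : ∀ ξ : Ordinal.{u}, ξ < ω₁o → Cardinal.mk (Hst ξ) ≤ Cardinal.continuum.{u} := by
    intro ξ
    induction ξ using Ordinal.induction with
    | _ ξ IH =>
    intro hξ
    have hξc : Cardinal.mk ξ.ToType ≤ Cardinal.continuum.{u} := by
      rw [Cardinal.mk_toType]
      have h2 := Cardinal.lt_ord.mp hξ
      rw [← Cardinal.succ_aleph0, Order.lt_succ_iff] at h2
      exact h2.trans Cardinal.aleph0_le_continuum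
    have hU : Cardinal.mk (Ufam ξ) ≤ Cardinal.continuum.{u} :=
      hUcard ξ (fun α hα => IH α hα (hα.trans hξ)) hξc
    rw [Hst_eq ξ]
    apply hclos
    refine le_trans (Cardinal.mk_union_le _ _) ?_
    refine Cardinal.add_le_of_le Cardinal.aleph0_le_continuum hU ?_
    refine le_trans Cardinal.mk_range_le ?_
    refine le_trans (mk_finset_le' _) ?_
    refine max_le Cardinal.aleph0_le_continuum ?_
    rw [Cardinal.mk_prod, Cardinal.mk_nat, Cardinal.lift_aleph0, Cardinal.lift_uzero]
    exact mul_le_continuum' hU Cardinal.aleph0_le_continuum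
  -- the total set
  set Htot : Set K := Ufam ω₁o with hHtot
  have hTotCard : Cardinal.mk Htot ≤ Cardinal.continuum.{u} := by
    refine hUcard ω₁o (fun α hα => hcard α hα) ?_
    rw [Cardinal.mk_toType, hω₁o, Cardinal.card_ord]
    exact Cardinal.aleph_one_le_continuum
  have hTotClosed : IsClosed Htot := by
    refine isClosed_of_closure_subset ?_
    intro z hz
    obtain ⟨u, hu, hlim⟩ := mem_closure_iff_seq_limit.mp hz
    have hex : ∀ n : ℕ, ∃ α, α < ω₁o ∧ u n ∈ Hst α := fun n => Umem _ _ (hu n)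
    choose ξs hξs1 hξs2 using hex
    have hsup : iSup ξs < ω₁o := by
      refine Ordinal.iSup_lt_ord_lift ?_ hξs1
      rw [hω₁o, Cardinal.isRegular_aleph_one.cof_eq]
      simpa using Cardinal.aleph0_lt_aleph_one
    have hζ : Order.succ (iSup ξs) < ω₁o := hω₁lim.succ_lt hsup
    have humem : ∀ n, u n ∈ Ufam (Order.succ (iSup ξs)) := by
      intro n
      refine Hsub (ξs n) _ ?_ (hξs2 n)
      exact Order.lt_succ_of_le (Ordinal.le_iSup ξs n)
    have hzmem : z ∈ closure (Ufam (Order.succ (iSup ξs))) :=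
      mem_closure_iff_seq_limit.mpr ⟨u, humem, hlim⟩
    have hzstep : z ∈ Hst (Order.succ (iSup ξs)) := by
      rw [Hst_eq]
      exact closure_mono Set.subset_union_left hzmem
    exact Hsub _ ω₁o hζ hzstep
  -- the total set is everything
  have hUniv : Htot = Set.univ := by
    by_contra hne
    obtain ⟨y, hy⟩ := (Set.ne_univ_iff_exists_notMem _).mp hne
    have hsep : ∀ x : ↥Htot, ∃ nn : ℕ, y ∉ b x.1 nn := by
      intro x
      have hxy : x.1 ≠ y := fun he => hy (he ▸ x.2)
      obtain ⟨u, v, hu, hv, hxu, hyv, hdisj⟩ := t2_separation hxy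
      obtain ⟨nn, hnn⟩ := hbb x.1 u hu hxu
      exact ⟨nn, fun hyb => Set.disjoint_left.mp hdisj (hnn hyb) hyv⟩
    choose nsel hnsel using hsep
    have hcomp : IsCompact Htot := hTotClosed.isCompact
    have hcov : Htot ⊆ ⋃ x : ↥Htot, b x.1 (nsel x) := fun x hx =>
      Set.mem_iUnion.mpr ⟨⟨x, hx⟩, hbm x (nsel ⟨x, hx⟩)⟩
    obtain ⟨t, ht⟩ := hcomp.elim_finite_subcover _ (fun x : ↥Htot => hbo x.1 (nsel x)) hcov
    have hξx : ∀ x : ↥Htot, ∃ α, α < ω₁o ∧ x.1 ∈ Hst α := fun x => Umem _ _ x.2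
    choose ξx hξx1 hξx2 using hξx
    set ζ : Ordinal.{u} := t.sup fun x => Order.succ (ξx x) with hζdef
    have hζ : ζ < ω₁o := by
      refine (Finset.sup_lt_iff hω₁lim.pos).mpr fun x _ => hω₁lim.succ_lt (hξx1 x)
    have hmemζ : ∀ x ∈ t, (x : ↥Htot).1 ∈ Ufam ζ := by
      intro x hx
      refine Hsub (ξx x) ζ ?_ (hξx2 x)
      exact lt_of_lt_of_le (Order.lt_succ _) (Finset.le_sup (f := fun x => Order.succ (ξx x)) hx)
    set tt : Finset (↥(Ufam ζ) × ℕ) :=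
      t.attach.image (fun x => (⟨x.1.1, hmemζ x.1 x.2⟩, nsel x.1)) with htt
    have hfam : ⋃₀ (famOf (Ufam ζ) tt) = ⋃ x ∈ t, b (x : ↥Htot).1 (nsel x) := by
      ext z
      constructor
      · rintro ⟨V, hV, hzV⟩
        obtain ⟨p, hp, rfl⟩ := hV
        obtain ⟨x, -, he⟩ := Finset.mem_image.mp (Finset.mem_coe.mp hp)
        refine Set.mem_iUnion₂.mpr ⟨x.1, x.2, ?_⟩
        rw [← he] at hzV
        exact hzV
      · intro hz
        obtain ⟨x, hxt, hzb⟩ := Set.mem_iUnion₂.mp hz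
        refine ⟨b x.1 (nsel x), ?_, hzb⟩
        exact ⟨(⟨x.1, hmemζ x hxt⟩, nsel x),
          Finset.mem_coe.mpr (Finset.mem_image.mpr ⟨⟨x, hxt⟩, Finset.mem_attach _ _, rfl⟩), rfl⟩
    have hne2 : ⋃₀ (famOf (Ufam ζ) tt) ≠ Set.univ := by
      rw [hfam]
      intro he
      have hy2 : y ∈ ⋃ x ∈ t, b (x : ↥Htot).1 (nsel x) := he ▸ Set.mem_univ y
      obtain ⟨x, -, hxb⟩ := Set.mem_iUnion₂.mp hy2
      exact hnsel x hxb
    have hwitmem : wit (famOf (Ufam ζ) tt) ∈ Hst ζ := by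
      rw [Hst_eq ζ]
      exact subset_closure (Or.inr ⟨tt, rfl⟩)
    have hwitTot : wit (famOf (Ufam ζ) tt) ∈ Htot := Hsub ζ ω₁o hζ hwitmem
    obtain ⟨x, hxt, hxb⟩ := Set.mem_iUnion₂.mp (ht hwitTot)
    apply hwit _ hne2
    rw [hfam]
    exact Set.mem_iUnion₂.mpr ⟨x, hxt, hxb⟩
  have hfin : Cardinal.mk K = Cardinal.mk Htot := by
    rw [hUniv]
    exact Cardinal.mk_univ.symm
  rw [hfin]
  exact hTotCard

end Arhangelskii

namespace CardGameAux

variable {X : Type u} [TopologicalSpace X]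

/-- Cardinality of a compact subset of a regular points-`Gδ` space. -/
lemma mk_compact_le [RegularSpace X]
    (hGδ : ∀ x : X, ∃ U : ℕ → Set X, (∀ n, IsOpen (U n)) ∧ (⋂ n, U n) = {x})
    {K : Set X} (hK : IsCompact K) : Cardinal.mk K ≤ Cardinal.continuum.{u} := by
  classical
  haveI hT1 : T1Space X := by
    rw [t1Space_iff_exists_open]
    intro x y hxy
    obtain ⟨U, hUo, hUx⟩ := hGδ x
    have hx : ∀ n, x ∈ U n := fun n => Set.mem_iInter.mp (by rw [hUx]; exact rfl) n
    have hy : y ∉ ⋂ n, U n := by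
      rw [hUx]
      exact fun h => hxy (Set.mem_singleton_iff.mp h).symm
    obtain ⟨n, hn⟩ : ∃ n, y ∉ U n := by
      by_contra h
      push_neg at h
      exact hy (Set.mem_iInter.mpr h)
    exact ⟨U n, hUo n, hx n, hn⟩
  haveI : T3Space X := ⟨⟩
  haveI : CompactSpace K := isCompact_iff_compactSpace.mp hK
  haveI : FirstCountableTopology ↥K := by
    refine firstCountable_of_gdelta ?_
    intro x
    obtain ⟨U, hUo, hUx⟩ := hGδ x.1
    refine ⟨fun n => Subtype.val ⁻¹' U n,
      fun n => (hUo n).preimage continuous_subtype_val, ?_⟩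
    rw [← Set.preimage_iInter, hUx]
    ext z
    simp [Subtype.ext_iff]
  exact arhangelskii_compact

/-- Outer approximating family for a compact set: a `≤ 𝔠`-sized family of open sets
separating the compact set from each outside point. -/
lemma outer_family [RegularSpace X]
    (hGδ : ∀ x : X, ∃ U : ℕ → Set X, (∀ n, IsOpen (U n)) ∧ (⋂ n, U n) = {x})
    {K : Set X} (hK : IsCompact K) :
    ∃ 𝒲 : Set (Set X), Cardinal.mk 𝒲 ≤ Cardinal.continuum.{u} ∧
      ∀ z ∉ K, ∃ W ∈ 𝒲, IsOpen W ∧ K ⊆ W ∧ z ∉ W := by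
  classical
  have hKcard : Cardinal.mk K ≤ Cardinal.continuum.{u} := mk_compact_le hGδ hK
  choose U hUo hUx using hGδ
  have hUmem : ∀ (x : X) (n : ℕ), x ∈ U x n := fun x n =>
    Set.mem_iInter.mp (by rw [hUx]; exact rfl) n
  refine ⟨Set.range (fun t : Finset (↥K × ℕ) => ⋃ p ∈ t, U (p : ↥K × ℕ).1.1 p.2), ?_, ?_⟩
  · refine le_trans Cardinal.mk_range_le ?_
    refine le_trans (mk_finset_le' _) ?_
    refine max_le Cardinal.aleph0_le_continuum ?_
    rw [Cardinal.mk_prod, Cardinal.mk_nat, Cardinal.lift_aleph0, Cardinal.lift_uzero]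
    exact mul_le_continuum' hKcard Cardinal.aleph0_le_continuum
  · intro z hz
    have hchoice : ∀ x : ↥K, ∃ n, z ∉ U x.1 n := by
      intro x
      have hzx : z ≠ x.1 := fun he => hz (he ▸ x.2)
      by_contra hcon
      push_neg at hcon
      have h2 : z ∈ ⋂ n, U x.1 n := Set.mem_iInter.mpr hcon
      rw [hUx x.1] at h2
      exact hzx (Set.mem_singleton_iff.mp h2)
    choose nz hnz using hchoice
    have hcov : K ⊆ ⋃ x : ↥K, U x.1 (nz x) := fun w hw =>
      Set.mem_iUnion.mpr ⟨⟨w, hw⟩, hUmem w (nz ⟨w, hw⟩)⟩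
    obtain ⟨t, ht⟩ := hK.elim_finite_subcover _ (fun x : ↥K => hUo x.1 (nz x)) hcov
    set tt : Finset (↥K × ℕ) := t.image (fun x => (x, nz x)) with htt
    refine ⟨⋃ p ∈ tt, U (p : ↥K × ℕ).1.1 p.2, ⟨tt, rfl⟩, ?_, ?_, ?_⟩
    · exact isOpen_biUnion fun p _ => hUo _ _
    · intro w hw
      obtain ⟨x, hxt, hxw⟩ := Set.mem_iUnion₂.mp (ht hw)
      exact Set.mem_iUnion₂.mpr ⟨(x, nz x), Finset.mem_image.mpr ⟨x, hxt, rfl⟩, hxw⟩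
    · intro hzin
      obtain ⟨p, hpt, hzp⟩ := Set.mem_iUnion₂.mp hzin
      obtain ⟨x, -, he⟩ := Finset.mem_image.mp hpt
      rw [← he] at hzp
      exact hnz x hzp

/-- The key family: for every position, a `≤ 𝔠`-sized family of open covers which realizes
the good set of the position as an intersection. -/
lemma exists_Gfam [RegularSpace X]
    (hGδ : ∀ x : X, ∃ U : ℕ → Set X, (∀ n, IsOpen (U n)) ∧ (⋂ n, U n) = {x})
    (S : BobStratFin X (Cardinal.aleph 1).ord) (hS : S.Winning)
    (ξ : Ordinal.{u}) (hξ : ξ < (Cardinal.aleph 1).ord)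
    (hist : ∀ α : Ordinal.{u}, α < ξ → Set (Set X)) :
    ∃ G : Set (Set (Set X)), Cardinal.mk G ≤ Cardinal.continuum.{u} ∧
      (∀ 𝒞 ∈ G, IsOpenCover 𝒞) ∧
      ∀ z ∉ Kset S ξ hξ hist, ∃ 𝒞 ∈ G,
        z ∉ closure (⋃₀ (↑(S.move ξ hξ hist 𝒞) : Set (Set X))) := by
  classical
  have hKcomp : IsCompact (Kset S ξ hξ hist) := Kset_compact S ξ hξ hist
  obtain ⟨𝒲, h𝒲c, h𝒲⟩ := outer_family hGδ hKcomp
  have hstep : ∀ W : Set X, IsOpen W → Kset S ξ hξ hist ⊆ W →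
      ∃ G : Set (Set (Set X)), Cardinal.mk G ≤ Cardinal.aleph 1 ∧
        (∀ 𝒞 ∈ G, IsOpenCover 𝒞) ∧
        ∀ z, z ∉ W → ∃ 𝒞 ∈ G,
          z ∉ closure (⋃₀ (↑(S.move ξ hξ hist 𝒞) : Set (Set X))) := by
    intro W hWo hKW
    have h𝒰cov : IsOpenCover ({O | ∃ 𝒞 : Set (Set X), IsOpenCover 𝒞 ∧
        O = (closure (⋃₀ (↑(S.move ξ hξ hist 𝒞) : Set (Set X))))ᶜ} ∪ {W}) := by
      constructor
      · rintro O (⟨𝒞, h𝒞, rfl⟩ | rfl)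
        · exact isClosed_closure.isOpen_compl
        · exact hWo
      · apply Set.eq_univ_of_forall
        intro z
        by_cases hzW : z ∈ W
        · exact ⟨W, Or.inr rfl, hzW⟩
        · have hzK : z ∉ Kset S ξ hξ hist := fun h => hzW (hKW h)
          obtain ⟨𝒞, h𝒞, hz⟩ := not_mem_Kset hzK
          exact ⟨_, Or.inl ⟨𝒞, h𝒞, rfl⟩, hz⟩
    obtain ⟨𝒮, h𝒮sub, h𝒮cov, h𝒮card⟩ := exists_subcover S hS h𝒰cov
    have hdec : ∀ s : ↥𝒮, ∃ 𝒞 : Set (Set X), IsOpenCover 𝒞 ∧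
        (s.1 = (closure (⋃₀ (↑(S.move ξ hξ hist 𝒞) : Set (Set X))))ᶜ ∨ s.1 = W) := by
      intro s
      rcases h𝒮sub s.2 with ⟨𝒞, h𝒞, he⟩ | he
      · exact ⟨𝒞, h𝒞, Or.inl he⟩
      · exact ⟨{Set.univ}, isOpenCover_univ, Or.inr he⟩
    choose dec hdec1 hdec2 using hdec
    refine ⟨Set.range dec, le_trans Cardinal.mk_range_le h𝒮card, ?_, ?_⟩
    · rintro 𝒞 ⟨s, rfl⟩
      exact hdec1 s
    · intro z hzW
      have hz : z ∈ ⋃₀ 𝒮 := by rw [h𝒮cov]; trivial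
      obtain ⟨s, hs𝒮, hzs⟩ := hz
      rcases hdec2 ⟨s, hs𝒮⟩ with he | he
      · refine ⟨dec ⟨s, hs𝒮⟩, ⟨_, rfl⟩, ?_⟩
        have hzs' : z ∈ (closure (⋃₀ (↑(S.move ξ hξ hist (dec ⟨s, hs𝒮⟩)) : Set (Set X))))ᶜ := by
          rw [← he]; exact hzs
        exact hzs'
      · have hzs' : z ∈ W := by rw [← he]; exact hzs
        exact absurd hzs' hzW
  have hstep' : ∀ w : ↥𝒲, ∃ G : Set (Set (Set X)),
      Cardinal.mk G ≤ Cardinal.aleph 1 ∧ (∀ 𝒞 ∈ G, IsOpenCover 𝒞) ∧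
      ((IsOpen w.1 ∧ Kset S ξ hξ hist ⊆ w.1) → ∀ z, z ∉ w.1 → ∃ 𝒞 ∈ G,
        z ∉ closure (⋃₀ (↑(S.move ξ hξ hist 𝒞) : Set (Set X)))) := by
    intro w
    by_cases h : IsOpen w.1 ∧ Kset S ξ hξ hist ⊆ w.1
    · obtain ⟨G, h1, h2, h3⟩ := hstep w.1 h.1 h.2
      exact ⟨G, h1, h2, fun _ => h3⟩
    · exact ⟨∅, by simp, by simp, fun hc => absurd hc h⟩
  choose GW hGW1 hGW2 hGW3 using hstep'
  refine ⟨⋃ w : ↥𝒲, GW w, ?_, ?_, ?_⟩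
  · refine le_trans (Cardinal.mk_iUnion_le _) ?_
    refine mul_le_continuum' h𝒲c ?_
    exact le_trans (ciSup_le' fun w => hGW1 w) Cardinal.aleph_one_le_continuum
  · rintro 𝒞 h𝒞
    obtain ⟨w, hw⟩ := Set.mem_iUnion.mp h𝒞
    exact hGW2 w 𝒞 hw
  · intro z hz
    obtain ⟨W, hW𝒲, hWo, hKW, hzW⟩ := h𝒲 z hz
    obtain ⟨𝒞, h𝒞G, h𝒞kill⟩ := hGW3 ⟨W, hW𝒲⟩ ⟨hWo, hKW⟩ z hzW
    exact ⟨𝒞, Set.mem_iUnion.mpr ⟨⟨W, hW𝒲⟩, h𝒞G⟩, h𝒞kill⟩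

/-- Restriction of a partial play. -/
def restr {ξ α : Ordinal.{u}} (hα : α < ξ) (p : ∀ β : Ordinal.{u}, β < ξ → Set (Set X)) :
    ∀ β : Ordinal.{u}, β < α → Set (Set X) := fun β hβ => p β (hβ.trans hα)

/-- The tree of plays generated by a family assignment `G`. -/
def Hset (G : ∀ ξ : Ordinal.{u}, ξ < (Cardinal.aleph 1).ord →
      (∀ α : Ordinal.{u}, α < ξ → Set (Set X)) → Set (Set (Set X)))
    (ξ : Ordinal.{u}) (hξ : ξ < (Cardinal.aleph 1).ord) :
    Set (∀ α : Ordinal.{u}, α < ξ → Set (Set X)) :=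
  {p | ∀ α (hα : α < ξ), p α hα ∈ G α (hα.trans hξ) (restr hα p)}

/-- Decoding a play from a `toType`-indexed function. -/
noncomputable def ofFun (ξ : Ordinal.{u}) (c : ξ.ToType → Set (Set X)) :
    ∀ α : Ordinal.{u}, α < ξ → Set (Set X) :=
  fun α hα => c ((@Ordinal.ToType.mk ξ) ⟨α, hα⟩)

/-- Coding a play as a `toType`-indexed function. -/
noncomputable def toFun (ξ : Ordinal.{u}) (p : ∀ α : Ordinal.{u}, α < ξ → Set (Set X)) :
    ξ.ToType → Set (Set X) :=
  fun i => p ((@Ordinal.ToType.mk ξ).symm i).1 ((@Ordinal.ToType.mk ξ).symm i).2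

lemma ofFun_toFun (ξ : Ordinal.{u}) (p : ∀ α : Ordinal.{u}, α < ξ → Set (Set X)) :
    ofFun ξ (toFun ξ p) = p := by
  funext α hα
  show p ((@Ordinal.ToType.mk ξ).symm ((@Ordinal.ToType.mk ξ) ⟨α, hα⟩)).1 _ = _
  exact congrArg (fun z : ↥(Set.Iio ξ) => p z.1 z.2)
    (OrderIso.symm_apply_apply (@Ordinal.ToType.mk ξ) ⟨α, hα⟩)

/-- Codes of plays in the tree. -/
noncomputable def Code (G : ∀ ξ : Ordinal.{u}, ξ < (Cardinal.aleph 1).ord →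
      (∀ α : Ordinal.{u}, α < ξ → Set (Set X)) → Set (Set (Set X)))
    (ξ : Ordinal.{u}) (hξ : ξ < (Cardinal.aleph 1).ord) :
    Set (ξ.ToType → Set (Set X)) :=
  toFun ξ '' Hset G ξ hξ

lemma restr_mem_Hset {G : ∀ ξ : Ordinal.{u}, ξ < (Cardinal.aleph 1).ord →
      (∀ α : Ordinal.{u}, α < ξ → Set (Set X)) → Set (Set (Set X))}
    {ξ : Ordinal.{u}} {hξ : ξ < (Cardinal.aleph 1).ord}
    {p : ∀ α : Ordinal.{u}, α < ξ → Set (Set X)} (hp : p ∈ Hset G ξ hξ)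
    {α : Ordinal.{u}} (hα : α < ξ) : restr hα p ∈ Hset G α (hα.trans hξ) :=
  fun β hβ => hp β (hβ.trans hα)

lemma code_card (G : ∀ ξ : Ordinal.{u}, ξ < (Cardinal.aleph 1).ord →
      (∀ α : Ordinal.{u}, α < ξ → Set (Set X)) → Set (Set (Set X)))
    (hG : ∀ ξ hξ hist, Cardinal.mk (G ξ hξ hist) ≤ Cardinal.continuum.{u}) :
    ∀ (ξ : Ordinal.{u}) (hξ : ξ < (Cardinal.aleph 1).ord),
      Cardinal.mk (Code G ξ hξ) ≤ Cardinal.continuum.{u} := by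
  intro ξ
  induction ξ using Ordinal.induction with
  | _ ξ IH =>
  intro hξ
  have hPool : ∀ (α : Ordinal.{u}) (hα : α < ξ),
      Cardinal.mk (⋃ c : ↥(Code G α (hα.trans hξ)), G α (hα.trans hξ) (ofFun α c.1)) ≤
        Cardinal.continuum.{u} := by
    intro α hα
    refine le_trans (Cardinal.mk_iUnion_le _) (mul_le_continuum' (IH α hα (hα.trans hξ)) ?_)
    exact ciSup_le' fun c => hG α _ _
  have hmem : ∀ (c : ↥(Code G ξ hξ)) (i : ξ.ToType), c.1 i ∈
      ⋃ c' : ↥(Code G ((@Ordinal.ToType.mk ξ).symm i).1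
        (((@Ordinal.ToType.mk ξ).symm i).2.trans hξ)),
        G ((@Ordinal.ToType.mk ξ).symm i).1 (((@Ordinal.ToType.mk ξ).symm i).2.trans hξ)
          (ofFun ((@Ordinal.ToType.mk ξ).symm i).1 c'.1) := by
    intro c i
    obtain ⟨p, hp, hpc⟩ := c.2
    set α := ((@Ordinal.ToType.mk ξ).symm i).1 with hα
    have hαξ : α < ξ := ((@Ordinal.ToType.mk ξ).symm i).2
    refine Set.mem_iUnion.mpr ⟨⟨toFun α (restr hαξ p),
      Set.mem_image_of_mem _ (restr_mem_Hset hp hαξ)⟩, ?_⟩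
    rw [ofFun_toFun]
    rw [← hpc]
    exact hp α hαξ
  have hinj : Function.Injective (fun (c : ↥(Code G ξ hξ)) =>
      (fun i : ξ.ToType => (⟨c.1 i, hmem c i⟩ : ↥(⋃ c' : ↥(Code G ((@Ordinal.ToType.mk ξ).symm i).1 (((@Ordinal.ToType.mk ξ).symm i).2.trans hξ)),
        G ((@Ordinal.ToType.mk ξ).symm i).1 (((@Ordinal.ToType.mk ξ).symm i).2.trans hξ)
          (ofFun ((@Ordinal.ToType.mk ξ).symm i).1 c'.1))))) := by
    intro c d h
    apply Subtype.ext
    funext i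
    exact congrArg Subtype.val (congrFun h i)
  have hcard := Cardinal.mk_le_of_injective hinj
  refine hcard.trans ?_
  rw [Cardinal.mk_pi]
  refine le_trans (Cardinal.prod_le_prod _ (fun _ => Cardinal.continuum.{u})
    (fun i => hPool ((@Ordinal.ToType.mk ξ).symm i).1 ((@Ordinal.ToType.mk ξ).symm i).2)) ?_
  rw [Cardinal.prod_const, Cardinal.lift_id, Cardinal.lift_id]
  have h2 : Cardinal.mk ξ.ToType ≤ Cardinal.aleph0 := by
    rw [Cardinal.mk_toType]
    have h3 := Cardinal.lt_ord.mp hξ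
    rwa [← Cardinal.succ_aleph0, Order.lt_succ_iff] at h3
  calc Cardinal.continuum.{u} ^ Cardinal.mk ξ.ToType
      ≤ Cardinal.continuum.{u} ^ Cardinal.aleph0.{u} :=
        Cardinal.power_le_power_left (Cardinal.aleph0_pos.trans_le Cardinal.aleph0_le_continuum).ne' h2
    _ = _ := continuum_power_aleph0'

end CardGameAux

/-- Main theorem: if `X` is a regular space with points `Gδ` and Bob has a winning strategy
in `G_fin^{ω₁}(O,O)`, then `|X| ≤ 2^ω`. -/
theorem card_le_continuum_of_bob_winning {X : Type u} [TopologicalSpace X] [RegularSpace X]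
    (hGδ : ∀ x : X, ∃ U : ℕ → Set X, (∀ n, IsOpen (U n)) ∧ (⋂ n, U n) = {x})
    (S : BobStratFin X (Cardinal.aleph 1).ord) (hS : S.Winning) :
    Cardinal.mk X ≤ Cardinal.continuum.{u} := by
  classical
  have hGfam := fun (ξ : Ordinal.{u}) (hξ : ξ < (Cardinal.aleph 1).ord)
      (hist : ∀ α : Ordinal.{u}, α < ξ → Set (Set X)) =>
    CardGameAux.exists_Gfam hGδ S hS ξ hξ hist
  choose Gf hGf1 hGf2 hGf3 using hGfam
  -- the diagonal covering claim: every point lies in a good set coming from the tree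
  have hcover : ∀ x : X, ∃ (ξ : Ordinal.{u}) (hξ : ξ < (Cardinal.aleph 1).ord)
      (c : ξ.ToType → Set (Set X)), c ∈ CardGameAux.Code Gf ξ hξ ∧
      x ∈ CardGameAux.Kset S ξ hξ (CardGameAux.ofFun ξ c) := by
    intro x
    set F : ∀ ξ : Ordinal.{u}, (∀ α : Ordinal.{u}, α < ξ → Set (Set X)) → Set (Set X) :=
      fun ξ rec =>
        if hκ : ξ < (Cardinal.aleph 1).ord then
          if hx : x ∉ CardGameAux.Kset S ξ hκ rec then
            Classical.choose (hGf3 ξ hκ rec x hx)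
          else {Set.univ}
        else {Set.univ} with hF
    set g : Ordinal.{u} → Set (Set X) := Ordinal.lt_wf.fix F with hg
    have g_eq : ∀ ξ, g ξ = F ξ (fun α _ => g α) := fun ξ => Ordinal.lt_wf.fix_eq F ξ
    have hgkey : ∀ (ξ : Ordinal.{u}) (hκ : ξ < (Cardinal.aleph 1).ord),
        x ∉ CardGameAux.Kset S ξ hκ (fun α _ => g α) →
        g ξ ∈ Gf ξ hκ (fun α _ => g α) ∧
        x ∉ closure (⋃₀ (↑(S.move ξ hκ (fun α _ => g α) (g ξ)) : Set (Set X))) := by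
      intro ξ hκ hx
      have he : g ξ = Classical.choose (hGf3 ξ hκ (fun α _ => g α) x hx) := by
        rw [g_eq ξ, hF]
        simp only
        rw [dif_pos hκ, dif_pos hx]
      obtain ⟨hmem, hkill⟩ := Classical.choose_spec (hGf3 ξ hκ (fun α _ => g α) x hx)
      rw [he]
      exact ⟨hmem, hkill⟩
    have hgcov : ∀ (ξ : Ordinal.{u}) (hκ : ξ < (Cardinal.aleph 1).ord),
        IsOpenCover (g ξ) := by
      intro ξ hκ
      rw [g_eq ξ, hF]
      simp only
      rw [dif_pos hκ]
      by_cases hx : x ∉ CardGameAux.Kset S ξ hκ (fun α _ => g α)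
      · rw [dif_pos hx]
        exact hGf2 ξ hκ _ _ (Classical.choose_spec (hGf3 ξ hκ _ x hx)).1
      · rw [dif_neg hx]
        exact CardGameAux.isOpenCover_univ
    have hexists : ∃ ξ : Ordinal.{u}, ∃ hκ : ξ < (Cardinal.aleph 1).ord,
        x ∈ CardGameAux.Kset S ξ hκ (fun α _ => g α) := by
      by_contra hno
      have hno' : ∀ (ξ : Ordinal.{u}) (hκ : ξ < (Cardinal.aleph 1).ord),
          x ∉ CardGameAux.Kset S ξ hκ (fun α _ => g α) :=
        fun ξ hκ hx => hno ⟨ξ, hκ, hx⟩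
      have hwin := hS (fun ξ _ => g ξ) (fun ξ hξ => hgcov ξ hξ)
      have hx := (Set.eq_univ_iff_forall.mp hwin) x
      obtain ⟨ξ, h1⟩ := Set.mem_iUnion.mp hx
      obtain ⟨hκ, h2⟩ := Set.mem_iUnion.mp h1
      exact (hgkey ξ hκ (hno' ξ hκ)).2 (subset_closure h2)
    have hPne : {ξ : Ordinal.{u} | ∃ hκ : ξ < (Cardinal.aleph 1).ord,
        x ∈ CardGameAux.Kset S ξ hκ (fun α _ => g α)}.Nonempty := hexists
    obtain ⟨hκ₀, hxK⟩ := Ordinal.lt_wf.min_mem _ hPne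
    have hmin : ∀ β, β < Ordinal.lt_wf.min _ hPne → β ∉ {ξ : Ordinal.{u} |
        ∃ hκ : ξ < (Cardinal.aleph 1).ord,
          x ∈ CardGameAux.Kset S ξ hκ (fun α _ => g α)} :=
      fun β hβ hβP => Ordinal.lt_wf.not_lt_min _ hβP hβ
    refine ⟨Ordinal.lt_wf.min _ hPne, hκ₀,
      CardGameAux.toFun _ (fun α _ => g α), Set.mem_image_of_mem _ ?_, ?_⟩
    · intro α hα
      have hα' : α < (Cardinal.aleph 1).ord := hα.trans hκ₀
      have hnx : x ∉ CardGameAux.Kset S α hα' (fun β _ => g β) :=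
        fun hxk => hmin α hα ⟨hα', hxk⟩
      exact (hgkey α hα' hnx).1
    · rw [CardGameAux.ofFun_toFun]
      exact hxK
  -- counting
  have hcode := CardGameAux.code_card Gf hGf1
  set e := @Ordinal.ToType.mk (Cardinal.aleph 1).ord with he
  set A : (Cardinal.aleph 1).ord.ToType → Set X := fun i =>
    ⋃ c : ↥(CardGameAux.Code Gf (e.symm i).1 (e.symm i).2),
      CardGameAux.Kset S (e.symm i).1 (e.symm i).2 (CardGameAux.ofFun _ c.1) with hA
  have hXsub : (Set.univ : Set X) ⊆ ⋃ i, A i := by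
    intro x _
    obtain ⟨ξ, hξ, c, hc, hx⟩ := hcover x
    refine Set.mem_iUnion.mpr ⟨e ⟨ξ, hξ⟩, ?_⟩
    show x ∈ ⋃ c' : ↥(CardGameAux.Code Gf (e.symm (e ⟨ξ, hξ⟩)).1 (e.symm (e ⟨ξ, hξ⟩)).2),
      CardGameAux.Kset S (e.symm (e ⟨ξ, hξ⟩)).1 (e.symm (e ⟨ξ, hξ⟩)).2
        (CardGameAux.ofFun _ c'.1)
    rw [OrderIso.symm_apply_apply]
    exact Set.mem_iUnion.mpr ⟨⟨c, hc⟩, hx⟩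
  have hAc : ∀ i, Cardinal.mk (A i) ≤ Cardinal.continuum.{u} := by
    intro i
    refine le_trans (Cardinal.mk_iUnion_le _) (mul_le_continuum' (hcode _ _) ?_)
    refine ciSup_le' fun c => ?_
    exact CardGameAux.mk_compact_le hGδ (CardGameAux.Kset_compact S _ _ _)
  calc Cardinal.mk X = Cardinal.mk (Set.univ : Set X) := Cardinal.mk_univ.symm
    _ ≤ Cardinal.mk (⋃ i, A i) := Cardinal.mk_le_mk_of_subset hXsub
    _ ≤ Cardinal.mk (Cardinal.aleph 1).ord.ToType * ⨆ i, Cardinal.mk (A i) :=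
        Cardinal.mk_iUnion_le A
    _ ≤ Cardinal.continuum.{u} := by
        rw [Cardinal.mk_toType, Cardinal.card_ord]
        exact mul_le_continuum' Cardinal.aleph_one_le_continuum (ciSup_le' hAc)
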